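/- arXiv:2007.08698 — 2 statements merged into one kernel-verified Lean document; each statement's English description precedes it below -/
import Mathlib

section
/- Let $x_1, \dots, x_N \in S^d$ maximize the number of perpendicular pairs $\#\{(i,j) : i < j, \; x_i \cdot x_j = 0\}$ among all $N$-point configurations on $S^d$. Then there exists an orthonormal basis $v_1, \dots, v_{d+1}$ of $\mathbb{R}^{d+1}$ such that after reordering, $x_i \in \{v_j, -v_j\}$ whenever $i \equiv j \pmod{d+1}$. -/
open scoped RealInnerProductSpace

/-- Number of perpendicular pairs in a configuration of `N` points on the sphere. -/
noncomputable def perpPairs {d N : ℕ} (x : Fin N → EuclideanSpace ℝ (Fin (d + 1))) : ℕ :=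
  Set.ncard {p : Fin N × Fin N | p.1 < p.2 ∧ ⟪x p.1, x p.2⟫ = 0}

lemma card_lt_pairs {N : ℕ} (G : SimpleGraph (Fin N)) [DecidableRel G.Adj] :
    Set.ncard {p : Fin N × Fin N | p.1 < p.2 ∧ G.Adj p.1 p.2} = G.edgeFinset.card := by
  classical
  rw [Set.ncard_eq_toFinset_card']
  apply Finset.card_bij (fun p _ => s(p.1, p.2))
  · intro p hp
    simp only [Set.mem_toFinset, Set.mem_setOf_eq] at hp
    rw [SimpleGraph.mem_edgeFinset]
    exact hp.2
  · intro p hp q hq h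
    simp only [Set.mem_toFinset, Set.mem_setOf_eq] at hp hq
    rw [Sym2.eq_iff] at h
    rcases h with ⟨h1, h2⟩ | ⟨h1, h2⟩
    · exact Prod.ext h1 h2
    · exfalso
      have := hp.1
      have := hq.1
      rw [Fin.lt_def] at *
      omega
  · intro e he
    rw [SimpleGraph.mem_edgeFinset] at he
    induction e using Sym2.ind with
    | _ a b =>
      rw [SimpleGraph.mem_edgeSet] at he
      rcases lt_or_gt_of_ne (G.ne_of_adj he) with h | h
      · exact ⟨(a, b), by simp [he, h], rfl⟩
      · exact ⟨(b, a), by simp [he.symm, h], Sym2.eq_swap⟩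

theorem stmt14 (d N : ℕ) (x : Fin N → EuclideanSpace ℝ (Fin (d + 1)))
    (hx : ∀ i, ‖x i‖ = 1)
    (hmax : ∀ y : Fin N → EuclideanSpace ℝ (Fin (d + 1)), (∀ i, ‖y i‖ = 1) →
      perpPairs y ≤ perpPairs x) :
    ∃ (v : Fin (d + 1) → EuclideanSpace ℝ (Fin (d + 1))) (σ : Equiv.Perm (Fin N)),
      Orthonormal ℝ v ∧
      ∀ (i : Fin N) (j : Fin (d + 1)), (i : ℕ) % (d + 1) = (j : ℕ) →
        x (σ i) = v j ∨ x (σ i) = -v j := by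
  classical
  -- the orthogonality graph
  set G : SimpleGraph (Fin N) :=
    { Adj := fun i j => i ≠ j ∧ ⟪x i, x j⟫ = 0
      symm := by
        constructor
        intro i j ⟨h1, h2⟩
        exact ⟨h1.symm, by rwa [real_inner_comm]⟩
      loopless := ⟨fun i h => h.1 rfl⟩ } with hG
  have hGadj : ∀ i j, G.Adj i j ↔ i ≠ j ∧ ⟪x i, x j⟫ = 0 := fun i j => Iff.rfl
  -- clique-freeness
  have hcf : G.CliqueFree (d + 2) := by
    intro t ht
    have horth : Orthonormal ℝ (fun i : t => x i) := by
      rw [orthonormal_iff_ite]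
      intro a b
      by_cases hab : a = b
      · subst hab
        rw [if_pos rfl, real_inner_self_eq_norm_sq, hx, one_pow]
      · have hne : (a : Fin N) ≠ b := fun h => hab (Subtype.ext h)
        have := ht.1 a.2 b.2 hne
        simp [hab, this.2]
    have hli := horth.linearIndependent
    have hcard := hli.fintype_card_le_finrank
    rw [finrank_euclideanSpace_fin, Fintype.card_coe, ht.2] at hcard
    omega
  -- perpPairs x equals edge count of G
  have hpx : perpPairs x = G.edgeFinset.card := by
    rw [perpPairs, ← card_lt_pairs G]
    congr 1
    ext ⟨i, j⟩
    simp only [Set.mem_setOf_eq, hGadj]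
    exact ⟨fun ⟨h1, h2⟩ => ⟨h1, h1.ne, h2⟩, fun ⟨h1, h2⟩ => ⟨h1, h2.2⟩⟩
  -- the canonical configuration
  set y : Fin N → EuclideanSpace ℝ (Fin (d + 1)) :=
    fun i => EuclideanSpace.single ⟨(i : ℕ) % (d + 1), Nat.mod_lt _ (by omega)⟩ (1 : ℝ) with hy
  have hynorm : ∀ i, ‖y i‖ = 1 := by
    intro i
    simp [hy, EuclideanSpace.norm_single]
  have hyinner : ∀ i j : Fin N, ⟪y i, y j⟫ = 0 ↔ (i : ℕ) % (d + 1) ≠ (j : ℕ) % (d + 1) := by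
    intro i j
    rw [hy]
    simp only [EuclideanSpace.inner_single_left, EuclideanSpace.single_apply, map_one, one_mul]
    by_cases h : (i : ℕ) % (d + 1) = (j : ℕ) % (d + 1)
    · simp [h, Fin.mk.injEq]
    · simp [Fin.mk.injEq, h, fun hh : (j:ℕ) % (d+1) = (i:ℕ) % (d+1) => h hh.symm]
  have hpy : perpPairs y = (SimpleGraph.turanGraph N (d + 1)).edgeFinset.card := by
    rw [perpPairs, ← card_lt_pairs]
    congr 1
    ext ⟨i, j⟩
    simp only [Set.mem_setOf_eq, SimpleGraph.turanGraph, hyinner]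
  -- G is Turán-maximal
  have hTM : G.IsTuranMaximal (d + 1) := by
    refine ⟨hcf, fun H _ hH => ?_⟩
    calc H.edgeFinset.card ≤ (SimpleGraph.turanGraph N (d + 1)).edgeFinset.card :=
          (SimpleGraph.isTuranMaximal_turanGraph (by omega)).2 hH
      _ = perpPairs y := hpy.symm
      _ ≤ perpPairs x := hmax y hynorm
      _ = G.edgeFinset.card := hpx
  have hiso := hTM.nonempty_iso_turanGraph
  rw [Fintype.card_fin] at hiso
  obtain ⟨φ⟩ := hiso
  set σ : Equiv.Perm (Fin N) := φ.toEquiv.symm with hσ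
  have hperp : ∀ a b : Fin N, (a : ℕ) % (d + 1) ≠ (b : ℕ) % (d + 1) →
      ⟪x (σ a), x (σ b)⟫ = 0 := by
    intro a b hab
    have : G.Adj (φ.symm a) (φ.symm b) := φ.symm.map_adj_iff.2 hab
    exact this.2
  -- representatives
  set v' : Fin (d + 1) → EuclideanSpace ℝ (Fin (d + 1)) :=
    fun j => if h : (j : ℕ) < N then x (σ ⟨(j : ℕ), h⟩) else 0 with hv'
  set s : Set (Fin (d + 1)) := {j | (j : ℕ) < N} with hs
  have hv's : ∀ j (h : j ∈ s), v' j = x (σ ⟨(j : ℕ), h⟩) := by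
    intro j h
    exact dif_pos h
  have horth' : Orthonormal ℝ (s.restrict v') := by
    rw [orthonormal_iff_ite]
    rintro ⟨a, ha⟩ ⟨b, hb⟩
    by_cases hab : a = b
    · subst hab
      rw [if_pos rfl]
      simp only [Set.restrict, Set.restrict_apply, hv's a ha]
      rw [real_inner_self_eq_norm_sq, hx, one_pow]
    · have : ((⟨(a : ℕ), ha⟩ : Fin N) : ℕ) % (d + 1) ≠ ((⟨(b : ℕ), hb⟩ : Fin N) : ℕ) % (d + 1) := by
        simp only [Nat.mod_eq_of_lt a.isLt, Nat.mod_eq_of_lt b.isLt]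
        exact fun h => hab (Fin.ext h)
      simp only [Set.restrict, Set.restrict_apply, hv's a ha, hv's b hb, hperp _ _ this]
      rw [if_neg (by simp [Subtype.ext_iff, hab])]
  obtain ⟨b, hb⟩ := horth'.exists_orthonormalBasis_extension_of_card_eq
    (by simp [finrank_euclideanSpace_fin])
  refine ⟨⇑b, σ, b.orthonormal, ?_⟩
  intro i j hij
  by_cases hi : (i : ℕ) < d + 1
  · left
    have hii : (i : ℕ) % (d + 1) = (i : ℕ) := Nat.mod_eq_of_lt hi
    have hji : (j : ℕ) = (i : ℕ) := by omega
    have hjs : j ∈ s := by rw [hs]; simp only [Set.mem_setOf_eq, hji]; exact i.isLt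
    rw [hb j hjs, hv's j hjs]
    exact congrArg (fun k => x (σ k)) (Fin.ext hji.symm)
  · -- all classes are present
    have hjN : ∀ j' : Fin (d + 1), (j' : ℕ) < N := fun j' => lt_of_lt_of_le j'.isLt (by
      have := i.isLt; omega)
    have hbs : ∀ j' : Fin (d + 1), b j' = x (σ ⟨(j' : ℕ), hjN j'⟩) := by
      intro j'
      rw [hb j' (hjN j'), hv's j' (hjN j')]
    have hud : ∀ j' : Fin (d + 1), j' ≠ j → ⟪b j', x (σ i)⟫ = 0 := by
      intro j' hj'
      rw [hbs j']
      apply hperp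
      simp only [Nat.mod_eq_of_lt j'.isLt, hij]
      exact fun h => hj' (Fin.ext h)
    have hrep : x (σ i) = ⟪b j, x (σ i)⟫ • b j := by
      conv_lhs => rw [← b.sum_repr' (x (σ i))]
      exact Finset.sum_eq_single_of_mem j (Finset.mem_univ j)
        (fun j' _ hj' => by rw [hud j' hj', zero_smul])
    have hnorm : |⟪b j, x (σ i)⟫| = 1 := by
      have h1 := congrArg norm hrep
      rwa [hx, norm_smul, Real.norm_eq_abs, b.orthonormal.1 j, mul_one, eq_comm] at h1
    rcases abs_eq (by norm_num : (0:ℝ) ≤ 1) |>.1 hnorm with h | h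
    · left; rw [hrep, h, one_smul]
    · right; rw [hrep, h, neg_smul, one_smul]
end

section
/- Let $d \ge 1$ and $n \ge 1$. Then $\max$ over all $(m_1, \dots, m_{d+1}) \in \mathbb{Z}_{\ge 0}^{d+1}$ with $\sum_i m_i = n$ of $\sum_{i < j} m_i m_j$ is attained exactly when each $m_i \in \{\lfloor \frac{n}{d+1} \rfloor, \lceil \frac{n}{d+1} \rceil\}$, and the maximum value equals $\sum_{m=0}^{n-1} \lceil \frac{d}{d+1} m \rceil$. -/
open Finset
private lemma sq_sum_eq (N : ℕ) (m : Fin N → ℕ) :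
    (∑ i, m i) ^ 2 =
      2 * (∑ p ∈ univ.filter (fun p : Fin N × Fin N => p.1 < p.2), m p.1 * m p.2)
        + ∑ i, m i ^ 2 := by
  have h1 : (∑ i, m i) ^ 2 = ∑ p ∈ (univ : Finset (Fin N × Fin N)), m p.1 * m p.2 := by
    rw [sq, Finset.sum_mul_sum, ← Finset.sum_product', Finset.univ_product_univ]
  have h2 : ∑ p ∈ (univ : Finset (Fin N × Fin N)), m p.1 * m p.2 =
      (∑ p ∈ univ.filter (fun p : Fin N × Fin N => p.1 < p.2), m p.1 * m p.2)
      + ((∑ p ∈ univ.filter (fun p : Fin N × Fin N => p.2 < p.1), m p.1 * m p.2)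
      + (∑ p ∈ univ.filter (fun p : Fin N × Fin N => p.1 = p.2), m p.1 * m p.2)) := by
    rw [Finset.sum_filter, Finset.sum_filter, Finset.sum_filter, ← Finset.sum_add_distrib,
      ← Finset.sum_add_distrib]
    refine Finset.sum_congr rfl fun p _ => ?_
    rcases lt_trichotomy p.1 p.2 with h | h | h
    · simp [h, lt_asymm h, h.ne]
    · simp [h, lt_irrefl]
    · simp [h, lt_asymm h, h.ne']
  have h3 : (∑ p ∈ univ.filter (fun p : Fin N × Fin N => p.2 < p.1), m p.1 * m p.2)
      = ∑ p ∈ univ.filter (fun p : Fin N × Fin N => p.1 < p.2), m p.1 * m p.2 := by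
    refine Finset.sum_nbij' (fun p => (p.2, p.1)) (fun p => (p.2, p.1)) ?_ ?_ ?_ ?_ ?_ <;>
      simp [mul_comm]
  have h4 : (∑ p ∈ univ.filter (fun p : Fin N × Fin N => p.1 = p.2), m p.1 * m p.2)
      = ∑ i, m i ^ 2 := by
    refine Finset.sum_nbij' (fun p => p.1) (fun i => (i, i)) ?_ ?_ ?_ ?_ ?_
    · intro a _; exact mem_univ _
    · intro a _; simp
    · intro a ha
      simp only [mem_filter, mem_univ, true_and] at ha
      exact Prod.ext rfl ha
    · intro a _; rfl
    · intro a ha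
      simp only [mem_filter, mem_univ, true_and] at ha
      rw [← ha, sq]
  rw [h1, h2, h3, h4]; ring
private lemma quad_le (q x : ℕ) :
    (2 * (q:ℤ) + 1) * x - q * (q + 1) ≤ (x : ℤ) ^ 2 := by
  rcases le_or_gt x q with h | h
  · have h' : (x:ℤ) ≤ q := by exact_mod_cast h
    nlinarith [mul_nonneg (show (0:ℤ) ≤ (q:ℤ) - x by linarith)
      (show (0:ℤ) ≤ (q:ℤ) + 1 - x by linarith)]
  · have h' : (q:ℤ) + 1 ≤ x := by exact_mod_cast h
    nlinarith [mul_nonneg (show (0:ℤ) ≤ (x:ℤ) - q by linarith)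
      (show (0:ℤ) ≤ (x:ℤ) - ((q:ℤ)+1) by linarith)]

private lemma quad_eq_iff (q x : ℕ) :
    (x : ℤ) ^ 2 = (2 * (q:ℤ) + 1) * x - q * (q + 1) ↔ x = q ∨ x = q + 1 := by
  constructor
  · intro h
    have h2 : ((x:ℤ) - q) * ((x:ℤ) - ((q:ℤ) + 1)) = 0 := by linear_combination h
    rcases mul_eq_zero.1 h2 with h3 | h3 <;> [left; right] <;> omega
  · rintro (rfl | rfl) <;> push_cast <;> ring

private lemma sum_linear (N q : ℕ) (m : Fin N → ℕ) :
    ∑ i, ((2 * (q:ℤ) + 1) * m i - q * (q + 1)) =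
      (2 * (q:ℤ) + 1) * (∑ i, (m i : ℤ)) - N * ((q:ℤ) * (q + 1)) := by
  rw [Finset.sum_sub_distrib, ← Finset.mul_sum, Finset.sum_const, Finset.card_univ,
    Fintype.card_fin, nsmul_eq_mul]

private lemma sum_sq_ge (N q : ℕ) (m : Fin N → ℕ) :
    (2 * (q:ℤ) + 1) * (∑ i, (m i : ℤ)) - N * ((q:ℤ) * (q + 1)) ≤ ∑ i, (m i : ℤ) ^ 2 := by
  rw [← sum_linear]
  exact Finset.sum_le_sum fun i _ => quad_le q (m i)

private lemma sum_sq_eq_iff (N q : ℕ) (m : Fin N → ℕ) :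
    (∑ i, (m i : ℤ) ^ 2 = (2 * (q:ℤ) + 1) * (∑ i, (m i : ℤ)) - N * ((q:ℤ) * (q + 1))) ↔
      ∀ i, m i = q ∨ m i = q + 1 := by
  rw [← sum_linear, ← sub_eq_zero, ← Finset.sum_sub_distrib,
    Finset.sum_eq_zero_iff_of_nonneg (fun i _ => sub_nonneg.2 (quad_le q (m i)))]
  constructor
  · intro h i
    exact (quad_eq_iff q (m i)).1 (sub_eq_zero.1 (h i (mem_univ i)))
  · intro h i _
    exact sub_eq_zero.2 ((quad_eq_iff q (m i)).2 (h i))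
private lemma sum_div_formula (N : ℕ) (hN : 0 < N) (n : ℕ) :
    2 * ∑ j ∈ range n, ((j / N : ℕ) : ℤ) =
      (N:ℤ) * ((n / N : ℕ) : ℤ) * (((n / N : ℕ) : ℤ) - 1)
        + 2 * ((n % N : ℕ) : ℤ) * ((n / N : ℕ) : ℤ) := by
  induction n with
  | zero => simp
  | succ n ih =>
    rw [Finset.sum_range_succ, mul_add, ih]
    have hdm : N * (n / N) + n % N = n := Nat.div_add_mod n N
    have hdm1 : N * ((n+1) / N) + (n+1) % N = n + 1 := Nat.div_add_mod (n+1) N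
    have hz : (N:ℤ) * ((n / N : ℕ) : ℤ) + ((n % N : ℕ) : ℤ) = (n:ℤ) := by exact_mod_cast hdm
    by_cases hdvd : N ∣ (n + 1)
    · have hq1 : (n+1)/N = n/N + 1 := by rw [Nat.succ_div]; simp [hdvd]
      rw [hq1] at hdm1 ⊢
      have hz1 : (N:ℤ) * ((n / N : ℕ) : ℤ) + (N:ℤ) + (((n+1) % N : ℕ) : ℤ) = (n:ℤ) + 1 := by
        have : (N:ℤ) * (((n / N : ℕ) : ℤ) + 1) + (((n+1) % N : ℕ) : ℤ) = (n:ℤ) + 1 := by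
          exact_mod_cast hdm1
        linear_combination this
      have hr0 : (n+1) % N = 0 := Nat.mod_eq_zero_of_dvd hdvd
      rw [hr0] at hz1 ⊢
      rw [Nat.cast_zero] at hz1
      have hrel : ((n % N : ℕ) : ℤ) = (N:ℤ) - 1 := by linarith
      rw [Nat.cast_add, Nat.cast_one, Nat.cast_zero]
      linear_combination (2 * ((n / N : ℕ) : ℤ)) * hrel
    · have hq1 : (n+1)/N = n/N := by rw [Nat.succ_div]; simp [hdvd]
      rw [hq1] at hdm1 ⊢
      have hz1 : (N:ℤ) * ((n / N : ℕ) : ℤ) + (((n+1) % N : ℕ) : ℤ) = (n:ℤ) + 1 := by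
        exact_mod_cast hdm1
      have hrel : (((n+1) % N : ℕ) : ℤ) = ((n % N : ℕ) : ℤ) + 1 := by linarith
      linear_combination (-2 * ((n / N : ℕ) : ℤ)) * hrel

private lemma ceil_frac (d j : ℕ) :
    ⌈(d : ℚ) / (d + 1) * j⌉ = (j : ℤ) - ((j / (d + 1) : ℕ) : ℤ) := by
  have hd : (0:ℚ) < (d:ℚ) + 1 := by positivity
  have hj : ((d:ℚ)+1) * ((j/(d+1) : ℕ) : ℚ) + ((j % (d+1) : ℕ) : ℚ) = (j:ℚ) := by
    exact_mod_cast Nat.div_add_mod j (d+1)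
  have hm : ((j % (d+1) : ℕ) : ℚ) < (d:ℚ) + 1 := by
    exact_mod_cast Nat.mod_lt j (Nat.succ_pos d)
  have hs : (0:ℚ) ≤ ((j % (d + 1) : ℕ) : ℚ) := Nat.cast_nonneg _
  rw [Int.ceil_eq_iff]
  generalize hk : j / (d + 1) = k at hj ⊢
  constructor
  · rw [div_mul_eq_mul_div, lt_div_iff₀ hd]
    push_cast
    nlinarith [hj, hm]
  · rw [div_mul_eq_mul_div, div_le_iff₀ hd]
    push_cast
    nlinarith [hj, hm, hs]

theorem stmt18 (d n : ℕ) (hd : 1 ≤ d) (hn : 1 ≤ n) :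
    (∀ m : Fin (d + 1) → ℕ, (∑ i, m i = n) →
      ((∀ m' : Fin (d + 1) → ℕ, (∑ i, m' i = n) →
          (∑ p ∈ Finset.univ.filter (fun p : Fin (d + 1) × Fin (d + 1) => p.1 < p.2),
            m' p.1 * m' p.2) ≤
          ∑ p ∈ Finset.univ.filter (fun p : Fin (d + 1) × Fin (d + 1) => p.1 < p.2),
            m p.1 * m p.2) ↔
        ∀ i, m i = n / (d + 1) ∨ m i = (n + d) / (d + 1))) ∧
    ∀ m : Fin (d + 1) → ℕ, (∑ i, m i = n) →
      (∀ i, m i = n / (d + 1) ∨ m i = (n + d) / (d + 1)) →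
      ((∑ p ∈ Finset.univ.filter (fun p : Fin (d + 1) × Fin (d + 1) => p.1 < p.2),
          m p.1 * m p.2 : ℤ) = ∑ j ∈ Finset.range n, ⌈(d : ℚ) / (d + 1) * j⌉) := by
  have hN : 0 < d + 1 := Nat.succ_pos d
  set q := n / (d + 1) with hq
  set r := n % (d + 1) with hr
  have hdm : (d + 1) * q + r = n := Nat.div_add_mod n (d + 1)
  have hrN : r < d + 1 := Nat.mod_lt n hN
  -- energy abbreviation
  set E : (Fin (d + 1) → ℕ) → ℕ := fun m =>
    ∑ p ∈ Finset.univ.filter (fun p : Fin (d + 1) × Fin (d + 1) => p.1 < p.2),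
      m p.1 * m p.2 with hE
  -- the ceiling value
  have hq' : (n + d) / (d + 1) = if r = 0 then q else q + 1 := by
    by_cases h0 : r = 0
    · rw [if_pos h0]
      have hn0 : n = (d + 1) * q := by rw [← hdm, h0, add_zero]
      have : n + d = (d + 1) * q + d := by rw [hn0]
      rw [this, Nat.mul_add_div hN, Nat.div_eq_of_lt (Nat.lt_succ_self d), add_zero]
    · rw [if_neg h0]
      have h1 : 1 ≤ r := Nat.pos_of_ne_zero h0
      obtain ⟨r', hr'⟩ : ∃ r', r = r' + 1 := ⟨r - 1, (Nat.succ_pred_eq_of_pos h1).symm⟩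
      have hmul : (d + 1) * (q + 1) = (d + 1) * q + (d + 1) := by ring
      have : n + d = (d + 1) * (q + 1) + r' := by
        rw [hmul, ← hdm, hr']; ring
      rw [this, Nat.mul_add_div hN,
        Nat.div_eq_of_lt (show r' < d + 1 by omega), add_zero]
  -- key identity  2E + Σ m² = n²
  have key2 : ∀ m : Fin (d + 1) → ℕ, (∑ i, m i = n) →
      2 * E m + ∑ i, m i ^ 2 = n ^ 2 := by
    intro m hsum
    rw [← hsum]
    exact (sq_sum_eq (d + 1) m).symm
  have castsum : ∀ m : Fin (d + 1) → ℕ, (∑ i, m i = n) →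
      (∑ i, (m i : ℤ)) = (n : ℤ) := by
    intro m hsum; exact_mod_cast hsum
  -- L, the minimal value of Σ m²
  have SgeL : ∀ m : Fin (d + 1) → ℕ, (∑ i, m i = n) →
      (2 * (q:ℤ) + 1) * n - (d + 1) * ((q:ℤ) * (q + 1)) ≤ ∑ i, (m i : ℤ) ^ 2 := by
    intro m hsum
    have := sum_sq_ge (d + 1) q m
    rw [castsum m hsum] at this
    exact_mod_cast this
  have Siff : ∀ m : Fin (d + 1) → ℕ, (∑ i, m i = n) →
      ((∑ i, (m i : ℤ) ^ 2 = (2 * (q:ℤ) + 1) * n - (d + 1) * ((q:ℤ) * (q + 1))) ↔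
        ∀ i, m i = q ∨ m i = q + 1) := by
    intro m hsum
    have := sum_sq_eq_iff (d + 1) q m
    rw [castsum m hsum] at this
    exact_mod_cast this
  -- balanced characterization
  have balanced_iff : ∀ m : Fin (d + 1) → ℕ, (∑ i, m i = n) →
      ((∀ i, m i = q ∨ m i = q + 1) ↔ (∀ i, m i = q ∨ m i = (n + d) / (d + 1))) := by
    intro m hsum
    rw [hq']
    by_cases h0 : r = 0
    · rw [if_pos h0]
      have hn0 : n = (d + 1) * q := by rw [← hdm, h0, add_zero]
      constructor
      · intro h i
        rcases h i with h1 | h1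
        · exact Or.inl h1
        · exfalso
          have hge : ∀ j, q ≤ m j := by
            intro j; rcases h j with h2 | h2 <;> omega
          have hlt : (∑ _j : Fin (d + 1), q) < ∑ j, m j :=
            Finset.sum_lt_sum (fun j _ => hge j)
              ⟨i, mem_univ i, by omega⟩
          rw [Finset.sum_const, card_univ, Fintype.card_fin, smul_eq_mul, hsum, hn0] at hlt
          exact lt_irrefl _ hlt
      · intro h i
        rcases h i with h1 | h1 <;> exact Or.inl h1
    · rw [if_neg h0]
  -- the balanced witness
  set m0 : Fin (d + 1) → ℕ := fun i => q + if (i : ℕ) < r then 1 else 0 with hm0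
  have hm0sum : ∑ i, m0 i = n := by
    rw [hm0, Finset.sum_add_distrib, Finset.sum_const, card_univ, Fintype.card_fin,
      smul_eq_mul]
    have h2 : (∑ i : Fin (d + 1), if (i : ℕ) < r then 1 else 0) = r := by
      rw [Fin.sum_univ_eq_sum_range (fun i => if i < r then 1 else 0) (d + 1),
        ← Finset.sum_filter]
      have hfil : Finset.filter (fun i => i < r) (Finset.range (d + 1)) = Finset.range r := by
        ext x; simp only [mem_filter, mem_range]; omega
      rw [hfil, Finset.sum_const, card_range, smul_eq_mul, mul_one]
    rw [h2, hdm]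
  have hm0bal : ∀ i, m0 i = q ∨ m0 i = q + 1 := by
    intro i; by_cases h : (i : ℕ) < r <;> simp [hm0, h]
  have hm0S : ∑ i, (m0 i : ℤ) ^ 2 = (2 * (q:ℤ) + 1) * n - (d + 1) * ((q:ℤ) * (q + 1)) :=
    (Siff m0 hm0sum).2 hm0bal
  -- maximizer characterization
  have max_iff : ∀ m : Fin (d + 1) → ℕ, (∑ i, m i = n) →
      ((∀ m' : Fin (d + 1) → ℕ, (∑ i, m' i = n) → E m' ≤ E m) ↔
        ∑ i, (m i : ℤ) ^ 2 = (2 * (q:ℤ) + 1) * n - (d + 1) * ((q:ℤ) * (q + 1))) := by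
    intro m hsum
    have k1 : 2 * (E m : ℤ) + ∑ i, (m i : ℤ) ^ 2 = (n : ℤ) ^ 2 := by
      exact_mod_cast key2 m hsum
    constructor
    · intro hmax
      have h1 : E m0 ≤ E m := hmax m0 hm0sum
      have k0 : 2 * (E m0 : ℤ) + ∑ i, (m0 i : ℤ) ^ 2 = (n : ℤ) ^ 2 := by
        exact_mod_cast key2 m0 hm0sum
      have h1' : (E m0 : ℤ) ≤ (E m : ℤ) := by exact_mod_cast h1
      have := SgeL m hsum
      rw [hm0S] at k0
      linarith
    · intro hS m' hsum'
      have k1' : 2 * (E m' : ℤ) + ∑ i, (m' i : ℤ) ^ 2 = (n : ℤ) ^ 2 := by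
        exact_mod_cast key2 m' hsum'
      have := SgeL m' hsum'
      have : (E m' : ℤ) ≤ (E m : ℤ) := by linarith
      exact_mod_cast this
  constructor
  · intro m hsum
    exact ((max_iff m hsum).trans (Siff m hsum)).trans (balanced_iff m hsum)
  · intro m hsum hbal
    have hbal' : ∀ i, m i = q ∨ m i = q + 1 := (balanced_iff m hsum).2 hbal
    have hS : ∑ i, (m i : ℤ) ^ 2 = (2 * (q:ℤ) + 1) * n - (d + 1) * ((q:ℤ) * (q + 1)) :=
      (Siff m hsum).2 hbal'
    have k1 : 2 * (E m : ℤ) + ∑ i, (m i : ℤ) ^ 2 = (n : ℤ) ^ 2 := by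
      exact_mod_cast key2 m hsum
    have hceil : ∑ j ∈ Finset.range n, ⌈(d : ℚ) / (d + 1) * j⌉ =
        ∑ j ∈ Finset.range n, ((j : ℤ) - ((j / (d + 1) : ℕ) : ℤ)) :=
      Finset.sum_congr rfl fun j _ => ceil_frac d j
    have hE2 : 2 * (E m : ℤ) = (n : ℤ) ^ 2 -
        ((2 * (q:ℤ) + 1) * n - (d + 1) * ((q:ℤ) * (q + 1))) := by linarith
    have hgoal : ((E m : ℕ) : ℤ) =
        ∑ p ∈ Finset.univ.filter (fun p : Fin (d + 1) × Fin (d + 1) => p.1 < p.2),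
          (m p.1 : ℤ) * (m p.2 : ℤ) := by
      simp only [hE]
      push_cast
      rfl
    rw [← hgoal, hceil]
    apply mul_left_cancel₀ (two_ne_zero (α := ℤ))
    rw [hE2]
    have expand : (2:ℤ) * ∑ j ∈ Finset.range n, ((j : ℤ) - ((j / (d + 1) : ℕ) : ℤ)) =
        2 * (∑ j ∈ Finset.range n, (j : ℤ)) - 2 * ∑ j ∈ Finset.range n, ((j / (d + 1) : ℕ) : ℤ) := by
      rw [Finset.sum_sub_distrib, mul_sub]
    rw [expand, sum_div_formula (d + 1) hN n]
    have hgauss : 2 * (∑ j ∈ Finset.range n, (j : ℤ)) = (n : ℤ) * ((n : ℤ) - 1) := by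
      have h := Finset.sum_range_id_mul_two n
      have h' : ((∑ i ∈ Finset.range n, i) * 2 : ℤ) = ((n * (n - 1) : ℕ) : ℤ) := by
        exact_mod_cast congrArg (Nat.cast : ℕ → ℤ) h
      push_cast [Nat.cast_sub hn] at h'
      linarith
    rw [hgauss]
    have hzn : (n : ℤ) = (d + 1) * (q : ℤ) + (r : ℤ) := by exact_mod_cast hdm.symm
    rw [← hq, ← hr]
    push_cast
    linear_combination (-2 * (q:ℤ)) * hzn
end
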